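/- arXiv:2405.14255 — 5 statements merged into one kernel-verified Lean document; each statement's English description precedes it below -/
import Mathlib

section
/- One-step conditional bound for SPPM: under strong monotonicity, the iterate x^{k+1} = (I + γA_{ξ^k})^{-1}(x^k) satisfies E[‖x^{k+1} − x⋆‖² | F^k] ≤ (1+γμ)^{-2} ‖x^k − x⋆‖² + (1+γμ)^{-2} γ² σ⋆², where σ⋆² = E_ξ[‖a_ξ⋆‖²] with a_ξ⋆ ∈ A_ξ(x⋆) chosen so that E_ξ[a_ξ⋆] = 0. -/
open RealInnerProductSpace MeasureTheory

/-- One-step conditional bound for the stochastic proximal point method (SPPM). -/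
theorem sppm_one_step {X : Type*} [NormedAddCommGroup X] [InnerProductSpace ℝ X]
    [FiniteDimensional ℝ X]
    {Ω : Type*} [MeasurableSpace Ω] (P : Measure Ω) [IsProbabilityMeasure P]
    (A : Ω → X → Set X) (μ γ : ℝ) (hμ : 0 < μ) (hγ : 0 < γ)
    (hmono : ∀ ξ x u y v, u ∈ A ξ x → v ∈ A ξ y → μ * ‖x - y‖ ^ 2 ≤ ⟪u - v, x - y⟫)
    (J : Ω → X → X) (hJ : ∀ ξ z, ∃ u ∈ A ξ (J ξ z), z - J ξ z = γ • u)
    (xstar : X) (astar : Ω → X) (hastar : ∀ ξ, astar ξ ∈ A ξ xstar)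
    (hmean : ∫ ξ, astar ξ ∂P = 0)
    (hint0 : Integrable astar P)
    (hint1 : Integrable (fun ξ => ‖astar ξ‖ ^ 2) P)
    (xk : X)
    (hint2 : Integrable (fun ξ => ‖J ξ xk - xstar‖ ^ 2) P) :
    ∫ ξ, ‖J ξ xk - xstar‖ ^ 2 ∂P ≤
      ((1 + γ * μ)⁻¹) ^ 2 * ‖xk - xstar‖ ^ 2 +
        ((1 + γ * μ)⁻¹) ^ 2 * γ ^ 2 * ∫ ξ, ‖astar ξ‖ ^ 2 ∂P := by
  have hpos : (0:ℝ) < 1 + γ * μ := by nlinarith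
  set c : ℝ := ((1 + γ * μ)⁻¹) ^ 2 with hc
  have hcpos : 0 < c := by positivity
  -- pointwise contraction
  have hpt : ∀ ξ, ‖J ξ xk - xstar‖ ^ 2 ≤ c * ‖(xk - xstar) - γ • astar ξ‖ ^ 2 := by
    intro ξ
    obtain ⟨u, hu, heq⟩ := hJ ξ xk
    set d := J ξ xk - xstar with hd
    set e := u - astar ξ with he
    have hmd : μ * ‖d‖ ^ 2 ≤ ⟪e, d⟫ := hmono ξ _ u xstar (astar ξ) hu (hastar ξ)
    have hz : (xk - xstar) - γ • astar ξ = d + γ • e := by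
      have : xk = J ξ xk + γ • u := by rw [← heq]; abel
      rw [this, hd, he, smul_sub]; abel
    rw [hz]
    have hexp : ‖d + γ • e‖ ^ 2 = ‖d‖ ^ 2 + 2 * (γ * ⟪e, d⟫) + γ ^ 2 * ‖e‖ ^ 2 := by
      rw [@norm_add_sq_real, real_inner_smul_right, norm_smul, real_inner_comm]
      simp [abs_of_pos hγ, mul_pow]
    have hcs : ⟪e, d⟫ ≤ ‖e‖ * ‖d‖ := real_inner_le_norm e d
    have hen : μ * ‖d‖ ≤ ‖e‖ := by
      rcases eq_or_lt_of_le (norm_nonneg d) with h0 | h0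
      · rw [← h0]; simpa using norm_nonneg e
      · have : μ * ‖d‖ * ‖d‖ ≤ ‖e‖ * ‖d‖ := by nlinarith
        exact le_of_mul_le_mul_right this h0
    have h2 : (μ * ‖d‖) ^ 2 ≤ ‖e‖ ^ 2 := by
      nlinarith [norm_nonneg d, norm_nonneg e, mul_nonneg hμ.le (norm_nonneg d)]
    have hkey : (1 + γ * μ) ^ 2 * ‖d‖ ^ 2 ≤ ‖d + γ • e‖ ^ 2 := by
      rw [hexp]
      nlinarith [mul_le_mul_of_nonneg_left hmd (by positivity : (0:ℝ) ≤ 2 * γ),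
        mul_le_mul_of_nonneg_left h2 (sq_nonneg γ)]
    have h1 : c * ((1 + γ * μ) ^ 2 * ‖d‖ ^ 2) = ‖d‖ ^ 2 := by
      rw [hc]; field_simp
    calc ‖d‖ ^ 2 = c * ((1 + γ * μ) ^ 2 * ‖d‖ ^ 2) := h1.symm
      _ ≤ c * ‖d + γ • e‖ ^ 2 := by
          exact mul_le_mul_of_nonneg_left hkey (le_of_lt hcpos)
  -- integrability of the RHS integrand
  have hinner : Integrable (fun ξ => ⟪xk - xstar, astar ξ⟫) P :=
    ((innerSL ℝ (xk - xstar)) : X →L[ℝ] ℝ).integrable_comp hint0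
  have hexpand : ∀ ξ, ‖(xk - xstar) - γ • astar ξ‖ ^ 2 =
      ‖xk - xstar‖ ^ 2 - 2 * γ * ⟪xk - xstar, astar ξ⟫ + γ ^ 2 * ‖astar ξ‖ ^ 2 := by
    intro ξ
    rw [@norm_sub_sq_real, real_inner_smul_right, norm_smul]
    simp [abs_of_pos hγ, mul_pow]
    ring
  have hint3 : Integrable (fun ξ => ‖(xk - xstar) - γ • astar ξ‖ ^ 2) P := by
    simp only [hexpand]
    exact (((integrable_const _).sub ((hinner.const_mul (2 * γ)))).add
      (hint1.const_mul (γ ^ 2)))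
  have hmono' : ∫ ξ, ‖J ξ xk - xstar‖ ^ 2 ∂P ≤
      ∫ ξ, c * ‖(xk - xstar) - γ • astar ξ‖ ^ 2 ∂P :=
    integral_mono hint2 (hint3.const_mul c) hpt
  have hval : ∫ ξ, ‖(xk - xstar) - γ • astar ξ‖ ^ 2 ∂P =
      ‖xk - xstar‖ ^ 2 + γ ^ 2 * ∫ ξ, ‖astar ξ‖ ^ 2 ∂P := by
    have hA : Integrable (fun ξ => ‖xk - xstar‖ ^ 2 - 2 * γ * ⟪xk - xstar, astar ξ⟫) P :=
      (integrable_const _).sub (hinner.const_mul (2 * γ))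
    have hB : Integrable (fun ξ => γ ^ 2 * ‖astar ξ‖ ^ 2) P := hint1.const_mul (γ ^ 2)
    simp only [hexpand]
    rw [integral_add hA hB,
      integral_sub (integrable_const _) (hinner.const_mul (2 * γ)),
      integral_const, integral_const_mul, integral_const_mul,
      integral_inner hint0, hmean]
    simp
  calc ∫ ξ, ‖J ξ xk - xstar‖ ^ 2 ∂P
      ≤ ∫ ξ, c * ‖(xk - xstar) - γ • astar ξ‖ ^ 2 ∂P := hmono'
    _ = c * ∫ ξ, ‖(xk - xstar) - γ • astar ξ‖ ^ 2 ∂P := integral_const_mul c _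
    _ = c * ‖xk - xstar‖ ^ 2 + c * γ ^ 2 * ∫ ξ, ‖astar ξ‖ ^ 2 ∂P := by
        rw [hval]; ring
end

section
/- Tightness of the SPPM bound: let A_ξ(x) = μ(x − x⋆) + a_ξ⋆ for μ > 0, x⋆ ∈ X, and vectors a_ξ⋆ with E_ξ[a_ξ⋆] = 0. Then SPPM with stepsize γ > 0 satisfies E[‖x^k − x⋆‖²] = (1+γμ)^{-2k} ‖x^0 − x⋆‖² + (1 − (1+γμ)^{-2k}) γ²σ⋆² / ((1+γμ)² − 1) with equality, where σ⋆² = E_ξ[‖a_ξ⋆‖²]. -/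
open RealInnerProductSpace MeasureTheory

/-- The SPPM iterates as a function of the first `k` i.i.d. samples. -/
def sppmIter {X Ω : Type*} (J : Ω → X → X) (x0 : X) : (k : ℕ) → (Fin k → Ω) → X
  | 0, _ => x0
  | k + 1, s => J (s (Fin.last k)) (sppmIter J x0 k fun i => s i.castSucc)

lemma integrable_comp_snd' {α β E : Type*} [MeasurableSpace α] [MeasurableSpace β]
    [NormedAddCommGroup E] (μ : Measure α) [IsProbabilityMeasure μ] (ν : Measure β)
    [IsProbabilityMeasure ν] {f : β → E} (hf : Integrable f ν) :
    Integrable (fun p : α × β => f p.2) (μ.prod ν) := by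
  have h : Integrable f (Measure.map Prod.snd (μ.prod ν)) := by
    rwa [Measure.map_snd_prod, measure_univ, one_smul]
  exact (integrable_map_measure h.aestronglyMeasurable measurable_snd.aemeasurable).mp h

lemma integrable_comp_fst' {α β E : Type*} [MeasurableSpace α] [MeasurableSpace β]
    [NormedAddCommGroup E] (μ : Measure α) [IsProbabilityMeasure μ] (ν : Measure β)
    [IsProbabilityMeasure ν] {f : α → E} (hf : Integrable f μ) :
    Integrable (fun p : α × β => f p.1) (μ.prod ν) := by
  have h : Integrable f (Measure.map Prod.fst (μ.prod ν)) := by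
    rwa [Measure.map_fst_prod, measure_univ, one_smul]
  exact (integrable_map_measure h.aestronglyMeasurable measurable_fst.aemeasurable).mp h

/-- Tightness of the SPPM bound: for the operators `A_ξ(x) = μ(x − x⋆) + a_ξ⋆`,
whose resolvents of `γ A_ξ` are `x ↦ (1+γμ)⁻¹ (x + γμ x⋆ − γ a_ξ⋆)`, the SPPM bound holds
with equality. -/
theorem sppm_bound_tight {X : Type*} [NormedAddCommGroup X] [InnerProductSpace ℝ X]
    [FiniteDimensional ℝ X] [MeasurableSpace X] [BorelSpace X]
    {Ω : Type*} [MeasurableSpace Ω] (P : Measure Ω) [IsProbabilityMeasure P]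
    (μ γ : ℝ) (hμ : 0 < μ) (hγ : 0 < γ)
    (xstar : X) (astar : Ω → X) (hmeas : Measurable astar)
    (hmean : ∫ ξ, astar ξ ∂P = 0)
    (hint0 : Integrable astar P)
    (hint : Integrable (fun ξ => ‖astar ξ‖ ^ 2) P)
    (J : Ω → X → X)
    (hJ : ∀ ξ x, J ξ x = (1 + γ * μ)⁻¹ • (x + (γ * μ) • xstar - γ • astar ξ))
    (x0 : X) (k : ℕ) :
    ∫ s, ‖sppmIter J x0 k s - xstar‖ ^ 2 ∂(Measure.pi fun _ : Fin k => P) =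
      ((1 + γ * μ)⁻¹) ^ (2 * k) * ‖x0 - xstar‖ ^ 2 +
        (1 - ((1 + γ * μ)⁻¹) ^ (2 * k)) * (γ ^ 2 * ∫ ξ, ‖astar ξ‖ ^ 2 ∂P) /
          ((1 + γ * μ) ^ 2 - 1) := by
  have hb1 : (1:ℝ) < 1 + γ * μ := by nlinarith
  set b : ℝ := 1 + γ * μ with hbdef
  have hb : (0:ℝ) < b := by linarith
  have hbne : b ≠ 0 := ne_of_gt hb
  have hb2ne : b ^ 2 - 1 ≠ 0 := by nlinarith
  set σ2 : ℝ := ∫ ξ, ‖astar ξ‖ ^ 2 ∂P with hσ2def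
  -- key pointwise identity
  have key : ∀ ξ x, J ξ x - xstar = b⁻¹ • (x - xstar - γ • astar ξ) := by
    intro ξ x
    have h : b • (J ξ x - xstar) = b • (b⁻¹ • (x - xstar - γ • astar ξ)) := by
      rw [hJ, smul_sub, smul_inv_smul₀ hbne, smul_inv_smul₀ hbne, hbdef, add_smul, one_smul]
      abel
    exact smul_right_injective X hbne h
  have keynorm : ∀ ξ x, ‖J ξ x - xstar‖ ^ 2 =
      b⁻¹ ^ 2 * (‖x - xstar‖ ^ 2 - 2 * γ * ⟪x - xstar, astar ξ⟫ + γ ^ 2 * ‖astar ξ‖ ^ 2) := by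
    intro ξ x
    rw [key, norm_smul, mul_pow, Real.norm_eq_abs, sq_abs, norm_sub_sq_real,
      real_inner_smul_right, norm_smul, mul_pow, Real.norm_eq_abs, sq_abs]
    ring
  -- measurability of the iterates
  have gmeas : ∀ n, Measurable (sppmIter J x0 n) := by
    intro n
    induction n with
    | zero => exact measurable_const
    | succ n ih =>
      have heq : sppmIter J x0 (n + 1) = fun s =>
          b⁻¹ • ((sppmIter J x0 n fun i => s i.castSucc) + (γ * μ) • xstar - γ • astar
            (s (Fin.last n))) := by
        funext s; rw [sppmIter, hJ]
      rw [heq]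
      exact ((((ih.comp (measurable_pi_lambda _ fun i => measurable_pi_apply i.castSucc)).add_const
        _).sub ((hmeas.comp (measurable_pi_apply _)).const_smul γ)).const_smul _)
  -- the composed-with-equivalence form
  have heqv : ∀ (n : ℕ) (s : Fin (n + 1) → Ω),
      ‖sppmIter J x0 (n + 1) s - xstar‖ ^ 2 =
        ((fun p : Ω × (Fin n → Ω) => ‖J p.1 (sppmIter J x0 n p.2) - xstar‖ ^ 2) ∘
          (MeasurableEquiv.piFinSuccAbove (fun _ : Fin (n + 1) => Ω) (Fin.last n))) s := by
    intro n s
    have h : (fun i : Fin n => s i.castSucc) = Fin.init s := rfl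
    simp [sppmIter, MeasurableEquiv.piFinSuccAbove, Fin.succAbove_last, h]
  -- integrability of the two-variable integrand
  have hFint : ∀ n, Integrable (fun s => ‖sppmIter J x0 n s - xstar‖ ^ 2)
        (Measure.pi fun _ : Fin n => P) →
      Integrable (fun p : Ω × (Fin n → Ω) => ‖J p.1 (sppmIter J x0 n p.2) - xstar‖ ^ 2)
        (P.prod (Measure.pi fun _ : Fin n => P)) := by
    intro n hn
    have heq : (fun p : Ω × (Fin n → Ω) => ‖J p.1 (sppmIter J x0 n p.2) - xstar‖ ^ 2)
        = fun p => b⁻¹ ^ 2 * (‖sppmIter J x0 n p.2 - xstar‖ ^ 2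
          - 2 * γ * ⟪sppmIter J x0 n p.2 - xstar, astar p.1⟫ + γ ^ 2 * ‖astar p.1‖ ^ 2) :=
      funext fun p => keynorm p.1 _
    rw [heq]
    have h1 : Integrable (fun p : Ω × (Fin n → Ω) => ‖sppmIter J x0 n p.2 - xstar‖ ^ 2)
        (P.prod (Measure.pi fun _ : Fin n => P)) := integrable_comp_snd' _ _ hn
    have h3 : Integrable (fun p : Ω × (Fin n → Ω) => ‖astar p.1‖ ^ 2)
        (P.prod (Measure.pi fun _ : Fin n => P)) := integrable_comp_fst' _ _ hint
    have h2 : Integrable (fun p : Ω × (Fin n → Ω) => ⟪sppmIter J x0 n p.2 - xstar, astar p.1⟫)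
        (P.prod (Measure.pi fun _ : Fin n => P)) := by
      refine (h1.add h3).mono' ?_ ?_
      · exact ((((gmeas n).comp measurable_snd).sub measurable_const).inner
          (hmeas.comp measurable_fst)).aestronglyMeasurable
      · filter_upwards with p
        have h := abs_real_inner_le_norm (sppmIter J x0 n p.2 - xstar) (astar p.1)
        have h2 := two_mul_le_add_sq ‖sppmIter J x0 n p.2 - xstar‖ ‖astar p.1‖
        have h3 : (0:ℝ) ≤ ‖sppmIter J x0 n p.2 - xstar‖ * ‖astar p.1‖ := by positivity
        rw [Real.norm_eq_abs]
        simp only [Pi.add_apply]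
        nlinarith
    exact ((h1.sub (h2.const_mul (2 * γ))).add (h3.const_mul (γ ^ 2))).const_mul _
  -- main induction
  have main : ∀ n, Integrable (fun s => ‖sppmIter J x0 n s - xstar‖ ^ 2)
        (Measure.pi fun _ : Fin n => P) ∧
      ∫ s, ‖sppmIter J x0 n s - xstar‖ ^ 2 ∂(Measure.pi fun _ : Fin n => P) =
        b⁻¹ ^ (2 * n) * ‖x0 - xstar‖ ^ 2 +
          (1 - b⁻¹ ^ (2 * n)) * (γ ^ 2 * σ2) / (b ^ 2 - 1) := by
    intro n
    induction n with
    | zero =>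
      constructor
      · simp only [sppmIter]; exact integrable_const _
      · simp only [sppmIter, integral_const, probReal_univ, ENNReal.toReal_one, one_smul,
          Nat.mul_zero, pow_zero, one_mul, sub_self, zero_mul, zero_div, add_zero]
    | succ n ih =>
      have hmp := measurePreserving_piFinSuccAbove (fun _ : Fin (n + 1) => P) (Fin.last n)
      have hemb := (MeasurableEquiv.piFinSuccAbove (fun _ : Fin (n + 1) => Ω)
        (Fin.last n)).measurableEmbedding
      have hF := hFint n ih.1
      have hint1 : Integrable (fun s => ‖sppmIter J x0 (n + 1) s - xstar‖ ^ 2)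
          (Measure.pi fun _ : Fin (n + 1) => P) := by
        have := (hmp.integrable_comp_emb hemb).mpr hF
        exact this.congr (Filter.Eventually.of_forall fun s => (heqv n s).symm)
      refine ⟨hint1, ?_⟩
      have step1 : ∫ s, ‖sppmIter J x0 (n + 1) s - xstar‖ ^ 2
            ∂(Measure.pi fun _ : Fin (n + 1) => P)
          = ∫ p, ‖J p.1 (sppmIter J x0 n p.2) - xstar‖ ^ 2
            ∂(P.prod (Measure.pi fun _ : Fin n => P)) := by
        rw [show (fun s => ‖sppmIter J x0 (n + 1) s - xstar‖ ^ 2) =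
          ((fun p : Ω × (Fin n → Ω) => ‖J p.1 (sppmIter J x0 n p.2) - xstar‖ ^ 2) ∘
            (MeasurableEquiv.piFinSuccAbove (fun _ : Fin (n + 1) => Ω) (Fin.last n)))
          from funext fun s => heqv n s]
        exact hmp.integral_comp hemb
          (fun p : Ω × (Fin n → Ω) => ‖J p.1 (sppmIter J x0 n p.2) - xstar‖ ^ 2)
      have hin : ∀ t : Fin n → Ω, ∫ ω, ‖J ω (sppmIter J x0 n t) - xstar‖ ^ 2 ∂P =
          b⁻¹ ^ 2 * (‖sppmIter J x0 n t - xstar‖ ^ 2 + γ ^ 2 * σ2) := by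
        intro t
        have hia : Integrable (fun ω => 2 * γ * ⟪sppmIter J x0 n t - xstar, astar ω⟫) P :=
          (hint0.const_inner _).const_mul _
        calc ∫ ω, ‖J ω (sppmIter J x0 n t) - xstar‖ ^ 2 ∂P
            = ∫ ω, b⁻¹ ^ 2 * (‖sppmIter J x0 n t - xstar‖ ^ 2
              - 2 * γ * ⟪sppmIter J x0 n t - xstar, astar ω⟫ + γ ^ 2 * ‖astar ω‖ ^ 2) ∂P := by
              simp only [keynorm]
          _ = b⁻¹ ^ 2 * (‖sppmIter J x0 n t - xstar‖ ^ 2 + γ ^ 2 * σ2) := by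
              rw [integral_const_mul, integral_add, integral_sub, integral_const,
                integral_const_mul, integral_const_mul, integral_inner hint0, hmean,
                inner_zero_right, probReal_univ, ← hσ2def]
              · simp
              · exact integrable_const _
              · exact hia
              · exact (integrable_const _).sub hia
              · exact hint.const_mul _
      have step2 : ∫ p, ‖J p.1 (sppmIter J x0 n p.2) - xstar‖ ^ 2
            ∂(P.prod (Measure.pi fun _ : Fin n => P))
          = b⁻¹ ^ 2 * ((∫ s, ‖sppmIter J x0 n s - xstar‖ ^ 2
              ∂(Measure.pi fun _ : Fin n => P)) + γ ^ 2 * σ2) := by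
        rw [integral_prod_symm _ hF]
        simp only [hin]
        rw [integral_const_mul, integral_add ih.1 (integrable_const _), integral_const,
          probReal_univ]
        simp
      rw [step1, step2, ih.2]
      have hpow : b⁻¹ ^ (2 * (n + 1)) = b⁻¹ ^ (2 * n) * b⁻¹ ^ 2 := by
        rw [← pow_add]; ring_nf
      rw [hpow]
      field_simp
      ring
  exact (main k).2
end

section
/- One-step contraction of SPPM-OC: under μ-strong monotonicity and δ-expected similarity, the iterate x^{k+1} = (I + γA_{ξ^k})^{-1}(x^k + γ(a^k_{ξ^k} − a^k)), where a^k = E_ξ[a_ξ^k] ∈ A(x^k) and a_ξ^k ∈ A_ξ(x^k), satisfies E[‖x^{k+1} − x⋆‖² | F^k] ≤ (1 + γ²δ²)/(1+γμ)² · ‖x^k − x⋆‖². -/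
open RealInnerProductSpace MeasureTheory

set_option maxHeartbeats 1000000 in
/-- One-step contraction of SPPM with operator correction (SPPM-OC). -/
theorem sppm_oc_one_step {X : Type*} [NormedAddCommGroup X] [InnerProductSpace ℝ X]
    [FiniteDimensional ℝ X]
    {Ω : Type*} [MeasurableSpace Ω] (P : Measure Ω) [IsProbabilityMeasure P]
    (A : Ω → X → Set X) (μ γ δ : ℝ) (hμ : 0 < μ) (hγ : 0 < γ) (hδ : 0 < δ)
    (hmono : ∀ ξ x u y v, u ∈ A ξ x → v ∈ A ξ y → μ * ‖x - y‖ ^ 2 ≤ ⟪u - v, x - y⟫)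
    (J : Ω → X → X) (hJ : ∀ ξ z, ∃ u ∈ A ξ (J ξ z), z - J ξ z = γ • u)
    (xstar : X) (astar : Ω → X) (hastar : ∀ ξ, astar ξ ∈ A ξ xstar)
    (hmeanstar : ∫ ξ, astar ξ ∂P = 0)
    (xk : X) (aξ : Ω → X) (haξ : ∀ ξ, aξ ξ ∈ A ξ xk)
    (abar : X) (habar : abar = ∫ ξ, aξ ξ ∂P)
    (hsim : ∫ ξ, ‖aξ ξ - abar - astar ξ‖ ^ 2 ∂P ≤ δ ^ 2 * ‖xk - xstar‖ ^ 2)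
    (hint0 : Integrable astar P) (hint1 : Integrable aξ P)
    (hint2 : Integrable (fun ξ => ‖aξ ξ - abar - astar ξ‖ ^ 2) P)
    (hint3 : Integrable (fun ξ => ‖J ξ (xk + γ • (aξ ξ - abar)) - xstar‖ ^ 2) P) :
    ∫ ξ, ‖J ξ (xk + γ • (aξ ξ - abar)) - xstar‖ ^ 2 ∂P ≤
      (1 + γ ^ 2 * δ ^ 2) / (1 + γ * μ) ^ 2 * ‖xk - xstar‖ ^ 2 := by
  have hγμ : (0:ℝ) < 1 + γ * μ := by positivity
  set w : X := xk - xstar with hw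
  set v : Ω → X := fun ξ => aξ ξ - abar - astar ξ with hv
  have hsim' : ∫ ξ, ‖v ξ‖ ^ 2 ∂P ≤ δ ^ 2 * ‖w‖ ^ 2 := hsim
  have hint2' : Integrable (fun ξ => ‖v ξ‖ ^ 2) P := hint2
  have hvint : Integrable v P := (hint1.sub (integrable_const abar)).sub hint0
  have hia : Integrable (fun ξ => aξ ξ - abar) P := hint1.sub (integrable_const abar)
  have hvmean : ∫ ξ, v ξ ∂P = 0 := by
    show ∫ ξ, (aξ ξ - abar) - astar ξ ∂P = 0
    rw [integral_sub hia hint0, integral_sub hint1 (integrable_const abar),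
      hmeanstar, integral_const]
    simp [habar]
  clear_value w v
  -- fixed point: J ξ (xstar + γ • astar ξ) = xstar
  have hfix : ∀ ξ, J ξ (xstar + γ • astar ξ) = xstar := by
    intro ξ
    obtain ⟨u, hu, he⟩ := hJ ξ (xstar + γ • astar ξ)
    set y := J ξ (xstar + γ • astar ξ) with hy
    have hm := hmono ξ y u xstar (astar ξ) hu (hastar ξ)
    have hsm : γ • (u - astar ξ) = -(y - xstar) := by
      rw [smul_sub, ← he]; abel
    have hin : γ * ⟪u - astar ξ, y - xstar⟫ = -(‖y - xstar‖ ^ 2) := by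
      rw [← real_inner_smul_left, hsm, inner_neg_left, real_inner_self_eq_norm_sq]
    have hsq : ‖y - xstar‖ ^ 2 = 0 := by nlinarith [sq_nonneg ‖y - xstar‖]
    have : ‖y - xstar‖ = 0 := pow_eq_zero_iff two_ne_zero |>.mp hsq
    exact sub_eq_zero.mp (norm_eq_zero.mp this)
  -- contraction of resolvent
  have hcontr : ∀ ξ z₁ z₂, (1 + γ * μ) ^ 2 * ‖J ξ z₁ - J ξ z₂‖ ^ 2 ≤ ‖z₁ - z₂‖ ^ 2 := by
    intro ξ z₁ z₂
    obtain ⟨u₁, hu₁, he₁⟩ := hJ ξ z₁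
    obtain ⟨u₂, hu₂, he₂⟩ := hJ ξ z₂
    set d := J ξ z₁ - J ξ z₂ with hd
    have hm := hmono ξ (J ξ z₁) u₁ (J ξ z₂) u₂ hu₁ hu₂
    have hsm : γ • (u₁ - u₂) = (z₁ - z₂) - d := by
      rw [smul_sub, ← he₁, ← he₂, hd]; abel
    have hin : γ * ⟪u₁ - u₂, d⟫ = ⟪z₁ - z₂, d⟫ - ‖d‖ ^ 2 := by
      rw [← real_inner_smul_left, hsm, inner_sub_left, real_inner_self_eq_norm_sq]
    have hle : (1 + γ * μ) * ‖d‖ ^ 2 ≤ ⟪z₁ - z₂, d⟫ := by nlinarith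
    have hcs : ⟪z₁ - z₂, d⟫ ≤ ‖z₁ - z₂‖ * ‖d‖ := real_inner_le_norm _ _
    rcases eq_or_lt_of_le (norm_nonneg d) with h0 | h0
    · rw [← h0]; nlinarith [sq_nonneg ‖z₁ - z₂‖]
    · have h1 : (1 + γ * μ) * ‖d‖ ≤ ‖z₁ - z₂‖ := by
        have := hle.trans hcs
        nlinarith
      nlinarith [norm_nonneg (z₁ - z₂), norm_nonneg d]
  -- pointwise bound
  have hpt : ∀ ξ, ‖J ξ (xk + γ • (aξ ξ - abar)) - xstar‖ ^ 2 ≤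
      ((1 + γ * μ) ^ 2)⁻¹ * ‖w + γ • v ξ‖ ^ 2 := by
    intro ξ
    have h := hcontr ξ (xk + γ • (aξ ξ - abar)) (xstar + γ • astar ξ)
    rw [hfix ξ] at h
    have hz : (xk + γ • (aξ ξ - abar)) - (xstar + γ • astar ξ) = w + γ • v ξ := by
      simp only [hv, hw, smul_sub]; abel
    rw [hz] at h
    have h2 : (0:ℝ) < (1 + γ * μ) ^ 2 := by positivity
    rw [inv_mul_eq_div, le_div_iff₀ h2, mul_comm]
    exact h
  -- integrability pieces
  have hinner : Integrable (fun ξ => ⟪w, v ξ⟫) P := hvint.const_inner w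
  -- expand the squared norm
  have hexp : ∀ ξ, ‖w + γ • v ξ‖ ^ 2 =
      ‖w‖ ^ 2 + (2 * γ) * ⟪w, v ξ⟫ + γ ^ 2 * ‖v ξ‖ ^ 2 := by
    intro ξ
    rw [norm_add_sq_real, real_inner_smul_right, norm_smul, mul_pow]
    have : |γ| = γ := abs_of_pos hγ
    simp [Real.norm_eq_abs, this]
    ring
  have hiA : Integrable (fun ξ => ‖w‖ ^ 2 + (2 * γ) * ⟪w, v ξ⟫) P :=
    (integrable_const _).add (hinner.const_mul _)
  have hiB : Integrable (fun ξ => γ ^ 2 * ‖v ξ‖ ^ 2) P := hint2'.const_mul _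
  have hint4 : Integrable (fun ξ => ‖w + γ • v ξ‖ ^ 2) P := by
    have : Integrable (fun ξ => (‖w‖ ^ 2 + (2 * γ) * ⟪w, v ξ⟫) + γ ^ 2 * ‖v ξ‖ ^ 2) P :=
      hiA.add hiB
    exact this.congr (Filter.Eventually.of_forall fun ξ => (hexp ξ).symm)
  have hIexp : ∫ ξ, ‖w + γ • v ξ‖ ^ 2 ∂P ≤ (1 + γ ^ 2 * δ ^ 2) * ‖w‖ ^ 2 := by
    have : ∫ ξ, ‖w + γ • v ξ‖ ^ 2 ∂P =
        ‖w‖ ^ 2 + (2 * γ) * ⟪w, ∫ ξ, v ξ ∂P⟫ + γ ^ 2 * ∫ ξ, ‖v ξ‖ ^ 2 ∂P := by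
      rw [integral_congr_ae (Filter.Eventually.of_forall hexp),
        integral_add hiA hiB,
        integral_add (integrable_const _) (hinner.const_mul _), integral_const,
        integral_const_mul, integral_const_mul, integral_inner hvint]
      simp
    rw [this, hvmean, inner_zero_right]
    have : γ ^ 2 * ∫ ξ, ‖v ξ‖ ^ 2 ∂P ≤ γ ^ 2 * (δ ^ 2 * ‖w‖ ^ 2) := by
      apply mul_le_mul_of_nonneg_left _ (by positivity)
      exact hsim'
    have hr : (1 + γ ^ 2 * δ ^ 2) * ‖w‖ ^ 2 = ‖w‖ ^ 2 + γ ^ 2 * (δ ^ 2 * ‖w‖ ^ 2) := by ring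
    linarith
  -- put everything together
  calc ∫ ξ, ‖J ξ (xk + γ • (aξ ξ - abar)) - xstar‖ ^ 2 ∂P
      ≤ ∫ ξ, ((1 + γ * μ) ^ 2)⁻¹ * ‖w + γ • v ξ‖ ^ 2 ∂P := by
        exact integral_mono hint3 (hint4.const_mul _) hpt
    _ = ((1 + γ * μ) ^ 2)⁻¹ * ∫ ξ, ‖w + γ • v ξ‖ ^ 2 ∂P := integral_const_mul _ _
    _ ≤ ((1 + γ * μ) ^ 2)⁻¹ * ((1 + γ ^ 2 * δ ^ 2) * ‖w‖ ^ 2) := by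
        apply mul_le_mul_of_nonneg_left hIexp (by positivity)
    _ = (1 + γ ^ 2 * δ ^ 2) / (1 + γ * μ) ^ 2 * ‖w‖ ^ 2 := by
        ring
end

section
/- L-SVRP Lyapunov contraction (one step): with α = γμ/p and V^k = ‖x^k − x⋆‖² + α‖w^k − x⋆‖², given the bounds E[‖x^{k+1}−x⋆‖² | F^k] ≤ (1+γμ)^{-2}‖x^k−x⋆‖² + γ²δ²(1+γμ)^{-2}‖w^k−x⋆‖² and E[‖w^{k+1}−x⋆‖² | F^k] = (1−p)‖w^k−x⋆‖² + p·E[‖x^{k+1}−x⋆‖² | F^k], one has E[V^{k+1} | F^k] ≤ max{ 1/(1+γμ), 1 − p + γδ²p/(μ(1+γμ)) } · V^k. -/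
/-- One-step Lyapunov contraction of L-SVRP, with `α = γμ/p`, where `a = ‖x^k − x⋆‖²`,
`b = ‖w^k − x⋆‖²`, `x' = E[‖x^{k+1}−x⋆‖²|F^k]` and `w' = E[‖w^{k+1}−x⋆‖²|F^k]`. -/
theorem lsvrp_lyapunov_one_step (γ μ δ p a b x' w' : ℝ)
    (hγ : 0 < γ) (hμ : 0 < μ) (hδ : 0 < δ) (hp : 0 < p) (hp1 : p ≤ 1)
    (ha : 0 ≤ a) (hb : 0 ≤ b)
    (hx : x' ≤ ((1 + γ * μ)⁻¹) ^ 2 * a + γ ^ 2 * δ ^ 2 * ((1 + γ * μ)⁻¹) ^ 2 * b)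
    (hw : w' = (1 - p) * b + p * x') :
    x' + γ * μ / p * w' ≤
      max (1 / (1 + γ * μ)) (1 - p + γ * δ ^ 2 * p / (μ * (1 + γ * μ))) *
        (a + γ * μ / p * b) := by
  have hc : (0:ℝ) < 1 + γ * μ := by positivity
  set M := max (1 / (1 + γ * μ)) (1 - p + γ * δ ^ 2 * p / (μ * (1 + γ * μ))) with hM
  have h1 : 1 / (1 + γ * μ) ≤ M := le_max_left _ _
  have h2 : 1 - p + γ * δ ^ 2 * p / (μ * (1 + γ * μ)) ≤ M := le_max_right _ _
  subst hw
  have step1 : x' + γ * μ / p * ((1 - p) * b + p * x')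
      = (1 + γ * μ) * x' + γ * μ / p * (1 - p) * b := by
    field_simp
    ring
  have step2 : (1 + γ * μ) * x'
      ≤ 1 / (1 + γ * μ) * a + γ ^ 2 * δ ^ 2 / (1 + γ * μ) * b := by
    have := mul_le_mul_of_nonneg_left hx hc.le
    calc (1 + γ * μ) * x' ≤ (1 + γ * μ) * (((1 + γ * μ)⁻¹) ^ 2 * a
          + γ ^ 2 * δ ^ 2 * ((1 + γ * μ)⁻¹) ^ 2 * b) := this
      _ = 1 / (1 + γ * μ) * a + γ ^ 2 * δ ^ 2 / (1 + γ * μ) * b := by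
          field_simp
  have step3 : γ * μ / p * (1 - p) * b + γ ^ 2 * δ ^ 2 / (1 + γ * μ) * b
      = γ * μ / p * ((1 - p + γ * δ ^ 2 * p / (μ * (1 + γ * μ))) * b) := by
    field_simp
  have hA : 1 / (1 + γ * μ) * a ≤ M * a := mul_le_mul_of_nonneg_right h1 ha
  have hα : 0 ≤ γ * μ / p := by positivity
  have hB : γ * μ / p * ((1 - p + γ * δ ^ 2 * p / (μ * (1 + γ * μ))) * b)
      ≤ γ * μ / p * (M * b) :=
    mul_le_mul_of_nonneg_left (mul_le_mul_of_nonneg_right h2 hb) hα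
  have : x' + γ * μ / p * ((1 - p) * b + p * x') ≤ M * a + γ * μ / p * (M * b) := by
    rw [step1]
    calc (1 + γ * μ) * x' + γ * μ / p * (1 - p) * b
        ≤ (1 / (1 + γ * μ) * a + γ ^ 2 * δ ^ 2 / (1 + γ * μ) * b)
          + γ * μ / p * (1 - p) * b := by linarith
      _ = 1 / (1 + γ * μ) * a
          + γ * μ / p * ((1 - p + γ * δ ^ 2 * p / (μ * (1 + γ * μ))) * b) := by
          linarith [step3]
      _ ≤ M * a + γ * μ / p * (M * b) := by linarith
  calc x' + γ * μ / p * ((1 - p) * b + p * x') ≤ M * a + γ * μ / p * (M * b) := this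
    _ = M * (a + γ * μ / p * b) := by ring
end

section
/- Point-SAGA Lyapunov contraction (one step): with α = nγμ and V^k = ‖x^k − x⋆‖² + (α/n)∑_{i=1}^n ‖w_i^k − x⋆‖², given the bounds E[‖x^{k+1}−x⋆‖² | F^k] ≤ (1+γμ)^{-2}‖x^k−x⋆‖² + (γ²δ̃²/(n(1+γμ)²))∑_{i=1}^n‖w_i^k−x⋆‖² and (1/n)∑_i E[‖w_i^{k+1}−x⋆‖² | F^k] = (1−1/n)(1/n)∑_i‖w_i^k−x⋆‖² + (1/n)E[‖x^{k+1}−x⋆‖² | F^k], one has E[V^{k+1} | F^k] ≤ max{ 1/(1+γμ), 1 − 1/n + γδ̃²/(nμ(1+γμ)) } · V^k. -/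
/-- One-step Lyapunov contraction of Point-SAGA, with `α = nγμ`, where `a = ‖x^k − x⋆‖²`,
`b = ∑ᵢ ‖wᵢ^k − x⋆‖²`, `x' = E[‖x^{k+1}−x⋆‖²|F^k]`, `w' = ∑ᵢ E[‖wᵢ^{k+1}−x⋆‖²|F^k]`. -/
theorem point_saga_lyapunov_one_step (n : ℕ) (hn : 2 ≤ n) (γ μ δ a b x' w' : ℝ)
    (hγ : 0 < γ) (hμ : 0 < μ) (hδ : 0 < δ)
    (ha : 0 ≤ a) (hb : 0 ≤ b)
    (hx : x' ≤ ((1 + γ * μ)⁻¹) ^ 2 * a + γ ^ 2 * δ ^ 2 / ((n : ℝ) * (1 + γ * μ) ^ 2) * b)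
    (hw : 1 / (n : ℝ) * w' = (1 - 1 / (n : ℝ)) * (1 / (n : ℝ)) * b + 1 / (n : ℝ) * x') :
    x' + γ * μ * w' ≤
      max (1 / (1 + γ * μ)) (1 - 1 / (n : ℝ) + γ * δ ^ 2 / ((n : ℝ) * μ * (1 + γ * μ))) *
        (a + γ * μ * b) := by
  have hn0 : (0:ℝ) < (n:ℝ) := by positivity
  have hnne : (n:ℝ) ≠ 0 := ne_of_gt hn0
  have hc : (0:ℝ) < 1 + γ * μ := by positivity
  have hcne : (1 + γ * μ) ≠ 0 := ne_of_gt hc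
  have hw' : w' = (1 - 1 / (n : ℝ)) * b + x' := by
    have h : (1/(n:ℝ)) * w' = (1/(n:ℝ)) * ((1 - 1/(n:ℝ)) * b + x') := by rw [hw]; ring
    exact mul_left_cancel₀ (one_div_ne_zero hnne) h
  set M := max (1 / (1 + γ * μ)) (1 - 1 / (n : ℝ) + γ * δ ^ 2 / ((n : ℝ) * μ * (1 + γ * μ)))
    with hM
  have hM1 : 1 / (1 + γ * μ) ≤ M := le_max_left _ _
  have hM2 : 1 - 1 / (n : ℝ) + γ * δ ^ 2 / ((n : ℝ) * μ * (1 + γ * μ)) ≤ M := le_max_right _ _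
  -- (1+γμ) * x' ≤ (1+γμ)⁻¹ a + γ²δ²/(n(1+γμ)) b
  have key : (1 + γ * μ) * x' ≤ (1 + γ * μ)⁻¹ * a + γ ^ 2 * δ ^ 2 / ((n:ℝ) * (1 + γ * μ)) * b := by
    have h1 : (1 + γ * μ) * x' ≤ (1 + γ * μ) *
        (((1 + γ * μ)⁻¹) ^ 2 * a + γ ^ 2 * δ ^ 2 / ((n : ℝ) * (1 + γ * μ) ^ 2) * b) :=
      mul_le_mul_of_nonneg_left hx (le_of_lt hc)
    have h2 : (1 + γ * μ) *
        (((1 + γ * μ)⁻¹) ^ 2 * a + γ ^ 2 * δ ^ 2 / ((n : ℝ) * (1 + γ * μ) ^ 2) * b)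
        = (1 + γ * μ)⁻¹ * a + γ ^ 2 * δ ^ 2 / ((n:ℝ) * (1 + γ * μ)) * b := by
      field_simp
    linarith [h1, h2 ▸ h1]
  have lhs_eq : x' + γ * μ * w' = (1 + γ * μ) * x' + γ * μ * (1 - 1 / (n:ℝ)) * b := by
    rw [hw']; ring
  have coeff : γ ^ 2 * δ ^ 2 / ((n:ℝ) * (1 + γ * μ)) + γ * μ * (1 - 1 / (n:ℝ))
      = γ * μ * (1 - 1 / (n : ℝ) + γ * δ ^ 2 / ((n : ℝ) * μ * (1 + γ * μ))) := by
    field_simp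
    ring
  have hμγ : 0 ≤ γ * μ := by positivity
  have hb2 : γ * μ * (1 - 1 / (n : ℝ) + γ * δ ^ 2 / ((n : ℝ) * μ * (1 + γ * μ))) * b
      ≤ γ * μ * M * b := by
    apply mul_le_mul_of_nonneg_right _ hb
    exact mul_le_mul_of_nonneg_left hM2 hμγ
  have ha2 : (1 + γ * μ)⁻¹ * a ≤ M * a := by
    apply mul_le_mul_of_nonneg_right _ ha
    rw [← one_div]; exact hM1
  calc x' + γ * μ * w'
      = (1 + γ * μ) * x' + γ * μ * (1 - 1 / (n:ℝ)) * b := lhs_eq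
    _ ≤ (1 + γ * μ)⁻¹ * a + γ ^ 2 * δ ^ 2 / ((n:ℝ) * (1 + γ * μ)) * b
        + γ * μ * (1 - 1 / (n:ℝ)) * b := by linarith
    _ = (1 + γ * μ)⁻¹ * a
        + γ * μ * (1 - 1 / (n : ℝ) + γ * δ ^ 2 / ((n : ℝ) * μ * (1 + γ * μ))) * b := by
        rw [← coeff]; ring
    _ ≤ M * a + γ * μ * M * b := by linarith
    _ = M * (a + γ * μ * b) := by ring
end
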